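/- (Shape dynamics of the WIP.) Let θ, α, φ : ℝ → ℝ be twice differentiable and set p₂ = f(α) θ̇ and p₁ = h φ̇ + m_b b r cos α α̇. Assume: (i) the momentum equation ṗ₁ = m_b r b sin α · θ̇² holds; and (ii) the tilt Euler–Lagrange equation holds: d/dt[(m_b b² + I_Byy) α̇ + r m_b b cos α · φ̇] = −r m_b b sin α · α̇ φ̇ + ½ f′(α) θ̇² + m_b g b sin α, where f′(α) = (I_Bxx + m_b b² − I_Bz) sin 2α is the derivative of f. Then the tilt angle satisfies the reduced shape dynamics (m_b b² + I_Byy − m_b² b² r² cos²α / h) α̈ = −(m_b² b² r² sin 2α / (2h)) α̇² + ((h f′(α) − m_b² b² r² sin 2α) / (2 h f(α)²)) p₂² + m_b g b sin α. -/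

import Mathlib

open Real

/-- The α-dependent yaw inertia I_θ(α) of the WIP. -/
noncomputable def Itheta (m_b m_W b d I_Wzz I_Bxx I_Bz : ℝ) (α : ℝ) : ℝ :=
  2 * I_Wzz + I_Bz * (cos α) ^ 2 + 2 * m_W * d ^ 2 + (I_Bxx + m_b * b ^ 2) * (sin α) ^ 2

/-- f(α) = I_θ(α) + (d²/(2r²)) I_Wyy. -/
noncomputable def fWip (m_b m_W b r d I_Wyy I_Wzz I_Bxx I_Bz : ℝ) (α : ℝ) : ℝ :=
  Itheta m_b m_W b d I_Wzz I_Bxx I_Bz α + d ^ 2 / (2 * r ^ 2) * I_Wyy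

/-- f′(α) = (I_Bxx + m_b b² − I_Bz) sin 2α, the derivative of f. -/
noncomputable def fWip' (m_b b I_Bxx I_Bz : ℝ) (α : ℝ) : ℝ :=
  (I_Bxx + m_b * b ^ 2 - I_Bz) * sin (2 * α)

/-- Auxiliary algebraic identity used to pass from the fraction-free shape
equation to the reduced shape dynamics. -/
lemma wip_alg (M K h f f' s c A ad td G : ℝ) (hne : h ≠ 0) (fne : f ≠ 0)
    (key : h * M * A - K * c ^ 2 * A
      = -(K * s * c) * ad ^ 2 + (h * f' / 2 - K * s * c) * td ^ 2 + h * G) :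
    (M - K * c ^ 2 / h) * A
      = -(K * (2 * s * c) / (2 * h)) * ad ^ 2
        + (h * f' - K * (2 * s * c)) / (2 * h * f ^ 2) * (f * td) ^ 2 + G := by
  field_simp
  linear_combination 2 * key

/-- Shape dynamics of the WIP. Given the forward momentum equation
and the tilt Euler–Lagrange equation, the tilt angle α satisfies the reduced
shape dynamics. -/
theorem wip_shape_dynamics
    (m_b m_W b r d g I_Wyy I_Wzz I_Bxx I_Byy I_Bz : ℝ)
    (hmb : 0 < m_b) (hmW : 0 < m_W) (hb : 0 < b) (hr : 0 < r) (hd : 0 < d)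
    (hg : 0 < g) (hIWyy : 0 < I_Wyy) (hIWzz : 0 < I_Wzz) (hIBxx : 0 < I_Bxx)
    (hIByy : 0 < I_Byy) (hIBz : 0 < I_Bz)
    (θ α φ : ℝ → ℝ)
    (hθ : Differentiable ℝ θ) (hθ' : Differentiable ℝ (deriv θ))
    (hα : Differentiable ℝ α) (hα' : Differentiable ℝ (deriv α))
    (hφ : Differentiable ℝ φ) (hφ' : Differentiable ℝ (deriv φ))
    -- (i) the momentum equation ṗ₁ = m_b r b sin α · θ̇²
    (hmom : ∀ t,
      deriv (fun s => ((m_b + 2 * m_W) * r ^ 2 + 2 * I_Wyy) * deriv φ s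
          + m_b * b * r * cos (α s) * deriv α s) t
        = m_b * r * b * sin (α t) * (deriv θ t) ^ 2)
    -- (ii) the tilt Euler–Lagrange equation
    (hEL : ∀ t,
      deriv (fun s => (m_b * b ^ 2 + I_Byy) * deriv α s
          + r * m_b * b * cos (α s) * deriv φ s) t
        = -(r * m_b * b * sin (α t)) * deriv α t * deriv φ t
          + 1 / 2 * fWip' m_b b I_Bxx I_Bz (α t) * (deriv θ t) ^ 2
          + m_b * g * b * sin (α t)) :
    ∀ t,
      (m_b * b ^ 2 + I_Byy
          - m_b ^ 2 * b ^ 2 * r ^ 2 * (cos (α t)) ^ 2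
              / ((m_b + 2 * m_W) * r ^ 2 + 2 * I_Wyy))
          * deriv (deriv α) t
        = -(m_b ^ 2 * b ^ 2 * r ^ 2 * sin (2 * α t)
              / (2 * ((m_b + 2 * m_W) * r ^ 2 + 2 * I_Wyy))) * (deriv α t) ^ 2
          + (((m_b + 2 * m_W) * r ^ 2 + 2 * I_Wyy) * fWip' m_b b I_Bxx I_Bz (α t)
                - m_b ^ 2 * b ^ 2 * r ^ 2 * sin (2 * α t))
              / (2 * ((m_b + 2 * m_W) * r ^ 2 + 2 * I_Wyy)
                  * (fWip m_b m_W b r d I_Wyy I_Wzz I_Bxx I_Bz (α t)) ^ 2)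
              * (fWip m_b m_W b r d I_Wyy I_Wzz I_Bxx I_Bz (α t) * deriv θ t) ^ 2
          + m_b * g * b * sin (α t) := by
  intro t
  have hpos : 0 < (m_b + 2 * m_W) * r ^ 2 + 2 * I_Wyy := by positivity
  have hne : (m_b + 2 * m_W) * r ^ 2 + 2 * I_Wyy ≠ 0 := ne_of_gt hpos
  have fpos : 0 < fWip m_b m_W b r d I_Wyy I_Wzz I_Bxx I_Bz (α t) := by
    unfold fWip Itheta
    have h1 : (0:ℝ) ≤ I_Bz * (cos (α t)) ^ 2 := by positivity
    have h2 : (0:ℝ) ≤ (I_Bxx + m_b * b ^ 2) * (sin (α t)) ^ 2 := by positivity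
    have h3 : (0:ℝ) < d ^ 2 / (2 * r ^ 2) * I_Wyy := by positivity
    nlinarith
  have fne : fWip m_b m_W b r d I_Wyy I_Wzz I_Bxx I_Bz (α t) ≠ 0 := ne_of_gt fpos
  -- derivative of cos ∘ α
  have hcos : HasDerivAt (fun s => cos (α s)) (-sin (α t) * deriv α t) t :=
    (hα t).hasDerivAt.cos
  -- momentum equation expanded
  have E1 : ((m_b + 2 * m_W) * r ^ 2 + 2 * I_Wyy) * deriv (deriv φ) t
      + m_b * b * r * ((-sin (α t) * deriv α t) * deriv α t
        + cos (α t) * deriv (deriv α) t)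
      = m_b * r * b * sin (α t) * (deriv θ t) ^ 2 := by
    have H : HasDerivAt (fun s => ((m_b + 2 * m_W) * r ^ 2 + 2 * I_Wyy) * deriv φ s
          + m_b * b * r * cos (α s) * deriv α s)
        (((m_b + 2 * m_W) * r ^ 2 + 2 * I_Wyy) * deriv (deriv φ) t
          + (m_b * b * r) * ((-sin (α t) * deriv α t) * deriv α t
            + cos (α t) * deriv (deriv α) t)) t := by
      have A := ((hcos.const_mul (m_b * b * r)).mul (hα' t).hasDerivAt)
      have B := ((hφ' t).hasDerivAt.const_mul
        ((m_b + 2 * m_W) * r ^ 2 + 2 * I_Wyy)).add A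
      exact B.congr_deriv (by ring)
    rw [← H.deriv]
    exact hmom t
  -- EL equation expanded
  have E2 : (m_b * b ^ 2 + I_Byy) * deriv (deriv α) t
      + r * m_b * b * ((-sin (α t) * deriv α t) * deriv φ t
        + cos (α t) * deriv (deriv φ) t)
      = -(r * m_b * b * sin (α t)) * deriv α t * deriv φ t
        + 1 / 2 * fWip' m_b b I_Bxx I_Bz (α t) * (deriv θ t) ^ 2
        + m_b * g * b * sin (α t) := by
    have H : HasDerivAt (fun s => (m_b * b ^ 2 + I_Byy) * deriv α s
          + r * m_b * b * cos (α s) * deriv φ s)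
        ((m_b * b ^ 2 + I_Byy) * deriv (deriv α) t
          + r * m_b * b * ((-sin (α t) * deriv α t) * deriv φ t
            + cos (α t) * deriv (deriv φ) t)) t := by
      have A := ((hcos.const_mul (r * m_b * b)).mul (hφ' t).hasDerivAt)
      have B := ((hα' t).hasDerivAt.const_mul (m_b * b ^ 2 + I_Byy)).add A
      exact B.congr_deriv (by ring)
    rw [← H.deriv]
    exact hEL t
  -- fraction-free shape equation
  have E3 : ((m_b + 2 * m_W) * r ^ 2 + 2 * I_Wyy) * (m_b * b ^ 2 + I_Byy)
        * deriv (deriv α) t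
      - m_b ^ 2 * b ^ 2 * r ^ 2 * (cos (α t)) ^ 2 * deriv (deriv α) t
      = -(m_b ^ 2 * b ^ 2 * r ^ 2 * sin (α t) * cos (α t)) * (deriv α t) ^ 2
        + (((m_b + 2 * m_W) * r ^ 2 + 2 * I_Wyy) * fWip' m_b b I_Bxx I_Bz (α t) / 2
            - m_b ^ 2 * b ^ 2 * r ^ 2 * sin (α t) * cos (α t)) * (deriv θ t) ^ 2
        + ((m_b + 2 * m_W) * r ^ 2 + 2 * I_Wyy) * (m_b * g * b * sin (α t)) := by
    linear_combination ((m_b + 2 * m_W) * r ^ 2 + 2 * I_Wyy) * E2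
      - (r * m_b * b * cos (α t)) * E1
  rw [sin_two_mul]
  have := wip_alg (m_b * b ^ 2 + I_Byy) (m_b ^ 2 * b ^ 2 * r ^ 2)
    ((m_b + 2 * m_W) * r ^ 2 + 2 * I_Wyy)
    (fWip m_b m_W b r d I_Wyy I_Wzz I_Bxx I_Bz (α t))
    (fWip' m_b b I_Bxx I_Bz (α t)) (sin (α t)) (cos (α t))
    (deriv (deriv α) t) (deriv α t) (deriv θ t) (m_b * g * b * sin (α t))
    hne fne E3
  linear_combination this
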